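/- Suppose h, f, g : ℝ → ℝ are continuous functions such that: (C1) there exists K > 1 with |h(x) - h(y)| ≥ K|x - y| for all x, y; (C2) there exists α > 0 with |f(x) - f(y)| ≥ α|x - y| for all x, y; (C3) g is bounded and Lipschitz with Lipschitz constant at most β. If β ≤ (1/4)α²K² when α < 2(1 - 1/K), or β < (K-1)(αK - K + 1) when α ≥ 2(1 - 1/K), then the functional equation φ(φ(x)) = h(φ(f(x))) + g(x) for all x ∈ ℝ has a bounded continuous solution φ : ℝ → ℝ. -/

import Mathlib

open Filter BoundedContinuousFunction

-- continuity from a Lipschitz-type bound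
lemma cont_of_lip (u : ℝ → ℝ) (C : ℝ) (hC : 0 ≤ C)
    (hu : ∀ a b : ℝ, |u a - u b| ≤ C * |a - b|) : Continuous u := by
  have : LipschitzWith (Real.toNNReal C) u := by
    apply LipschitzWith.of_dist_le_mul
    intro a b
    rw [Real.dist_eq, Real.dist_eq, Real.coe_toNNReal _ hC]
    exact hu a b
  exact this.continuous

-- inverse of an expanding continuous map
lemma exists_inverse (h : ℝ → ℝ) (hh : Continuous h) (c : ℝ) (hc : 0 < c)
    (hexp : ∀ x y : ℝ, c * |x - y| ≤ |h x - h y|) :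
    ∃ hi : ℝ → ℝ, (∀ y, h (hi y) = y) ∧ (∀ x, hi (h x) = x) ∧
      (∀ a b : ℝ, c * |hi a - hi b| ≤ |a - b|) := by
  have hinj : Function.Injective h := by
    intro x y hxy
    by_contra hne
    have h1 := hexp x y
    rw [hxy, sub_self, abs_zero] at h1
    have h2 : 0 < |x - y| := abs_pos.mpr (sub_ne_zero.mpr hne)
    nlinarith
  have hsurj : Function.Surjective h := by
    have hmono := hh.strictMono_of_inj hinj
    have hup : ∀ x : ℝ, 0 ≤ x → c * x ≤ |h x - h 0| := by
      intro x hx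
      have := hexp x 0
      rwa [sub_zero, abs_of_nonneg hx] at this
    rcases hmono with hm | hm
    · apply hh.surjective
      · apply tendsto_atTop_mono' _ (show ∀ᶠ x in atTop, h 0 + c * x ≤ h x from ?_)
        · exact tendsto_atTop_add_const_left _ _ (Tendsto.const_mul_atTop hc tendsto_id)
        · filter_upwards [eventually_ge_atTop (0:ℝ)] with x hx
          have h1 := hup x hx
          have h2 : h 0 ≤ h x := (hm.le_iff_le).mpr hx
          rw [abs_of_nonneg (by linarith)] at h1
          linarith
      · apply tendsto_atBot_mono' _ (show ∀ᶠ x in atBot, h x ≤ h 0 + c * x from ?_)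
        · exact tendsto_atBot_add_const_left _ _ (Tendsto.const_mul_atBot hc tendsto_id)
        · filter_upwards [eventually_le_atBot (0:ℝ)] with x hx
          have h1 := hexp x 0
          rw [sub_zero, abs_of_nonpos hx] at h1
          have h2 : h x ≤ h 0 := (hm.le_iff_le).mpr hx
          rw [abs_of_nonpos (by linarith)] at h1
          linarith
    · apply hh.surjective'
      · apply tendsto_atTop_mono' _ (show ∀ᶠ x in atBot, h 0 + c * (-x) ≤ h x from ?_)
        · apply tendsto_atTop_add_const_left
          exact Tendsto.const_mul_atTop hc tendsto_neg_atBot_atTop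
        · filter_upwards [eventually_le_atBot (0:ℝ)] with x hx
          have h1 := hexp x 0
          rw [sub_zero, abs_of_nonpos hx] at h1
          have h2 : h 0 ≤ h x := (hm.le_iff_ge).mpr hx
          rw [abs_of_nonneg (by linarith)] at h1
          linarith
      · apply tendsto_atBot_mono' _ (show ∀ᶠ x in atTop, h x ≤ h 0 + c * (-x) from ?_)
        · apply tendsto_atBot_add_const_left
          exact Tendsto.const_mul_atBot hc tendsto_neg_atTop_atBot
        · filter_upwards [eventually_ge_atTop (0:ℝ)] with x hx
          have h1 := hup x hx
          have h2 : h x ≤ h 0 := (hm.le_iff_ge).mpr hx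
          rw [abs_of_nonpos (by linarith)] at h1
          nlinarith
  refine ⟨Function.surjInv hsurj, fun y => Function.surjInv_eq hsurj y, ?_, ?_⟩
  · intro x
    exact hinj (Function.surjInv_eq hsurj (h x))
  · intro a b
    have := hexp (Function.surjInv hsurj a) (Function.surjInv hsurj b)
    rwa [Function.surjInv_eq hsurj, Function.surjInv_eq hsurj] at this

-- choice of the Lipschitz constant L
lemma choose_L (K α β : ℝ) (hK : 1 < K) (hα : 0 < α) (hβ : 0 ≤ β)
    (hcond1 : α < 2 * (1 - 1 / K) → β ≤ (1 / 4) * α ^ 2 * K ^ 2)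
    (hcond2 : 2 * (1 - 1 / K) ≤ α → β < (K - 1) * (α * K - K + 1)) :
    ∃ L : ℝ, 0 ≤ L ∧ L < K - 1 ∧ L ^ 2 + β ≤ α * K * L := by
  have hK0 : (0:ℝ) < K := lt_trans one_pos hK
  rcases lt_or_ge α (2 * (1 - 1 / K)) with hcase | hcase
  · refine ⟨α * K / 2, by positivity, ?_, ?_⟩
    · have h1 : α * K < 2 * (1 - 1 / K) * K := by
        exact mul_lt_mul_of_pos_right hcase hK0
      have h2 : 2 * (1 - 1 / K) * K = 2 * (K - 1) := by field_simp
      linarith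
    · have := hcond1 hcase
      nlinarith
  · have hδ : 0 < α * K * (K - 1) - (K - 1) ^ 2 - β := by
      have := hcond2 hcase
      nlinarith
    set δ := α * K * (K - 1) - (K - 1) ^ 2 - β with hδdef
    set ε := min ((K - 1) / 2) (δ / (α * K + K)) with hεdef
    have hεpos : 0 < ε := lt_min (by linarith) (by positivity)
    have hε1 : ε ≤ (K - 1) / 2 := min_le_left _ _
    have hε2 : ε ≤ δ / (α * K + K) := min_le_right _ _
    have hε2' : ε * (α * K + K) ≤ δ := by
      rw [← le_div_iff₀ (by positivity)]; exact hε2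
    refine ⟨K - 1 - ε, by linarith, by linarith, ?_⟩
    nlinarith [sq_nonneg ε, mul_pos hεpos hεpos]

theorem stmt_4 (h f g : ℝ → ℝ) (hh : Continuous h) (hf : Continuous f) (hg : Continuous g)
    (K : ℝ) (hK : 1 < K) (hexp : ∀ x y : ℝ, K * |x - y| ≤ |h x - h y|)
    (α : ℝ) (hα : 0 < α) (hfexp : ∀ x y : ℝ, α * |x - y| ≤ |f x - f y|)
    (β : ℝ) (hβ : 0 ≤ β)
    (hgb : ∃ M : ℝ, ∀ x : ℝ, |g x| ≤ M)
    (hglip : ∀ x y : ℝ, |g x - g y| ≤ β * |x - y|)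
    (hcond1 : α < 2 * (1 - 1 / K) → β ≤ (1 / 4) * α ^ 2 * K ^ 2)
    (hcond2 : 2 * (1 - 1 / K) ≤ α → β < (K - 1) * (α * K - K + 1)) :
    ∃ φ : ℝ → ℝ, Continuous φ ∧ (∃ M : ℝ, ∀ x : ℝ, |φ x| ≤ M) ∧
      ∀ x : ℝ, φ (φ x) = h (φ (f x)) + g x := by
  classical
  obtain ⟨M, hM⟩ := hgb
  have hM0 : 0 ≤ M := le_trans (abs_nonneg _) (hM 0)
  have hK0 : (0:ℝ) < K := lt_trans one_pos hK
  obtain ⟨hi, hhi, hih, hilip⟩ := exists_inverse h hh K hK0 hexp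
  obtain ⟨fi, hfi, hif, filip⟩ := exists_inverse f hf α hα hfexp
  have hicont : Continuous hi := by
    apply cont_of_lip hi (1 / K) (by positivity)
    intro a b
    have := hilip a b
    rw [div_mul_eq_mul_div, le_div_iff₀ hK0]
    linarith [hilip a b]
  have ficont : Continuous fi := by
    apply cont_of_lip fi (1 / α) (by positivity)
    intro a b
    rw [div_mul_eq_mul_div, le_div_iff₀ hα]
    linarith [filip a b]
  obtain ⟨L, hL0, hLK, hq⟩ := choose_L K α β hK hα hβ hcond1 hcond2
  set R : ℝ := (K * |hi 0| + M) / (K - 1) with hRdef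
  have hK1 : K - 1 ≠ 0 := by linarith
  have hRK : (K - 1) * R = K * |hi 0| + M := by
    rw [hRdef]; field_simp
  have hR0 : 0 ≤ R := div_nonneg (by positivity) (by linarith)
  -- the invariant set
  set S : Set (ℝ →ᵇ ℝ) :=
    {φ | (∀ x y : ℝ, |φ x - φ y| ≤ L * |x - y|) ∧ ∀ x : ℝ, |φ x| ≤ R} with hSdef
  have hSclosed : IsClosed S := by
    have h1 : IsClosed {φ : ℝ →ᵇ ℝ | ∀ x y : ℝ, |φ x - φ y| ≤ L * |x - y|} := by
      have : {φ : ℝ →ᵇ ℝ | ∀ x y : ℝ, |φ x - φ y| ≤ L * |x - y|} =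
          ⋂ (x : ℝ) (y : ℝ), {φ : ℝ →ᵇ ℝ | |φ x - φ y| ≤ L * |x - y|} := by
        ext φ; simp [Set.mem_iInter]
      rw [this]
      refine isClosed_iInter fun x => isClosed_iInter fun y => ?_
      exact isClosed_le (((continuous_eval_const x).sub (continuous_eval_const y)).abs)
        continuous_const
    have h2 : IsClosed {φ : ℝ →ᵇ ℝ | ∀ x : ℝ, |φ x| ≤ R} := by
      have : {φ : ℝ →ᵇ ℝ | ∀ x : ℝ, |φ x| ≤ R} =
          ⋂ (x : ℝ), {φ : ℝ →ᵇ ℝ | |φ x| ≤ R} := by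
        ext φ; simp [Set.mem_iInter]
      rw [this]
      refine isClosed_iInter fun x => ?_
      exact isClosed_le ((continuous_eval_const x).abs) continuous_const
    exact h1.inter h2
  haveI : CompleteSpace S := hSclosed.completeSpace_coe
  haveI : Nonempty S := ⟨⟨0, by
    constructor
    · intro x y
      simp only [BoundedContinuousFunction.coe_zero, Pi.zero_apply, sub_zero, abs_zero]
      positivity
    · intro x
      simp only [BoundedContinuousFunction.coe_zero, Pi.zero_apply, abs_zero]
      exact hR0⟩⟩
  -- the operator
  have key : ∀ φ : ℝ →ᵇ ℝ, φ ∈ S → ∀ y y' : ℝ,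
      |hi (φ (φ (fi y)) - g (fi y)) - hi (φ (φ (fi y')) - g (fi y'))| ≤ L * |y - y'| := by
    intro φ hφ y y'
    set u := fi y
    set u' := fi y'
    have e1 : K * |hi (φ (φ u) - g u) - hi (φ (φ u') - g u')|
        ≤ |(φ (φ u) - g u) - (φ (φ u') - g u')| := hilip _ _
    have e2 : |(φ (φ u) - g u) - (φ (φ u') - g u')| ≤ |φ (φ u) - φ (φ u')| + |g u - g u'| := by
      have := abs_sub (φ (φ u) - g u) (φ (φ u') - g u')
      calc |(φ (φ u) - g u) - (φ (φ u') - g u')|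
          = |(φ (φ u) - φ (φ u')) + (g u' - g u)| := by ring_nf
        _ ≤ |φ (φ u) - φ (φ u')| + |g u' - g u| := abs_add_le _ _
        _ = |φ (φ u) - φ (φ u')| + |g u - g u'| := by rw [abs_sub_comm (g u')]
    have e3 : |φ (φ u) - φ (φ u')| ≤ L * |φ u - φ u'| := hφ.1 _ _
    have e4 : |φ u - φ u'| ≤ L * |u - u'| := hφ.1 _ _
    have e5 : |g u - g u'| ≤ β * |u - u'| := hglip _ _
    have e6 : α * |u - u'| ≤ |y - y'| := by
      have := filip y y'
      exact this
    have hD0 : 0 ≤ |hi (φ (φ u) - g u) - hi (φ (φ u') - g u')| := abs_nonneg _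
    have huu0 : 0 ≤ |u - u'| := abs_nonneg _
    have hyy0 : 0 ≤ |y - y'| := abs_nonneg _
    -- K * D ≤ (L^2 + β) * |u - u'| ;  α * |u-u'| ≤ |y-y'| ;  L^2 + β ≤ α K L
    have e7 : K * |hi (φ (φ u) - g u) - hi (φ (φ u') - g u')| ≤ (L ^ 2 + β) * |u - u'| := by
      nlinarith [mul_le_mul_of_nonneg_left e4 hL0]
    rw [← mul_le_mul_iff_right₀ (show (0:ℝ) < α * K by positivity)]
    nlinarith [mul_le_mul_of_nonneg_left e6 (show (0:ℝ) ≤ L^2 + β by positivity),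
      mul_le_mul_of_nonneg_left e7 hα.le,
      mul_le_mul_of_nonneg_right hq hyy0]
  have keyB : ∀ φ : ℝ →ᵇ ℝ, φ ∈ S → ∀ y : ℝ, |hi (φ (φ (fi y)) - g (fi y))| ≤ R := by
    intro φ hφ y
    set u := fi y
    have e1 : K * |hi (φ (φ u) - g u) - hi 0| ≤ |(φ (φ u) - g u) - 0| := hilip _ _
    have e2 : |(φ (φ u) - g u) - 0| ≤ R + M := by
      rw [sub_zero]
      calc |φ (φ u) - g u| ≤ |φ (φ u)| + |g u| := abs_sub _ _
        _ ≤ R + M := add_le_add (hφ.2 _) (hM _)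
    have e3 : |hi (φ (φ u) - g u)| ≤ |hi (φ (φ u) - g u) - hi 0| + |hi 0| := by
      calc |hi (φ (φ u) - g u)| = |(hi (φ (φ u) - g u) - hi 0) + hi 0| := by ring_nf
        _ ≤ _ := abs_add_le _ _
    nlinarith [abs_nonneg (hi 0)]
  -- package T
  set Tf : (ℝ →ᵇ ℝ) → ℝ → ℝ := fun φ y => hi (φ (φ (fi y)) - g (fi y)) with hTfdef
  have Tcont : ∀ φ : ℝ →ᵇ ℝ, Continuous (Tf φ) := by
    intro φ
    exact hicont.comp (((φ.continuous.comp (φ.continuous.comp ficont)).sub (hg.comp ficont)))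
  have hbound : ∀ φ : S, ∀ x y : ℝ, dist (Tf φ.1 x) (Tf φ.1 y) ≤ 2 * R := by
    intro φ x y
    rw [Real.dist_eq]
    have h1 := keyB φ.1 φ.2 x
    have h2 := keyB φ.1 φ.2 y
    calc |Tf φ.1 x - Tf φ.1 y| ≤ |Tf φ.1 x| + |Tf φ.1 y| := abs_sub _ _
      _ ≤ 2 * R := by simp only [hTfdef] at h1 h2 ⊢; linarith
  let Tb : S → (ℝ →ᵇ ℝ) := fun φ => mkOfBound ⟨Tf φ.1, Tcont φ.1⟩ (2 * R) (hbound φ)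
  have hTbmem : ∀ φ : S, Tb φ ∈ S := by
    intro φ
    constructor
    · intro x y
      exact key φ.1 φ.2 x y
    · intro x
      exact keyB φ.1 φ.2 x
  let T : S → S := fun φ => ⟨Tb φ, hTbmem φ⟩
  have hTapp : ∀ (φ : S) (y : ℝ),
      ((T φ : ℝ →ᵇ ℝ) : ℝ → ℝ) y = hi ((φ : ℝ →ᵇ ℝ) ((φ : ℝ →ᵇ ℝ) (fi y)) - g (fi y)) :=
    fun φ y => rfl
  set κ : NNReal := Real.toNNReal ((L + 1) / K) with hκdef
  have hκcoe : (κ : ℝ) = (L + 1) / K := Real.coe_toNNReal _ (by positivity)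
  have hκ1 : κ < 1 := by
    rw [← NNReal.coe_lt_coe, hκcoe, NNReal.coe_one, div_lt_one hK0]
    linarith
  have hTcontract : ContractingWith κ T := by
    refine ⟨hκ1, LipschitzWith.of_dist_le_mul fun φ ψ => ?_⟩
    rw [Subtype.dist_eq, hκcoe]
    have hd0 : 0 ≤ dist (φ : ℝ →ᵇ ℝ) (ψ : ℝ →ᵇ ℝ) := dist_nonneg
    have hdist : dist ((T φ : ℝ →ᵇ ℝ)) ((T ψ : ℝ →ᵇ ℝ)) ≤
        (L + 1) / K * dist (φ : ℝ →ᵇ ℝ) (ψ : ℝ →ᵇ ℝ) := by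
      rw [BoundedContinuousFunction.dist_le (by positivity)]
      intro y
      rw [Real.dist_eq, hTapp, hTapp]
      set u := fi y
      set d := dist (φ : ℝ →ᵇ ℝ) (ψ : ℝ →ᵇ ℝ) with hd
      have e1 : K * |hi ((φ:ℝ→ᵇℝ) ((φ:ℝ→ᵇℝ) u) - g u) - hi ((ψ:ℝ→ᵇℝ) ((ψ:ℝ→ᵇℝ) u) - g u)|
          ≤ |(φ:ℝ→ᵇℝ) ((φ:ℝ→ᵇℝ) u) - (ψ:ℝ→ᵇℝ) ((ψ:ℝ→ᵇℝ) u)| := by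
        have h1 := hilip ((φ:ℝ→ᵇℝ) ((φ:ℝ→ᵇℝ) u) - g u) ((ψ:ℝ→ᵇℝ) ((ψ:ℝ→ᵇℝ) u) - g u)
        have h2 : ((φ:ℝ→ᵇℝ) ((φ:ℝ→ᵇℝ) u) - g u) - ((ψ:ℝ→ᵇℝ) ((ψ:ℝ→ᵇℝ) u) - g u)
            = (φ:ℝ→ᵇℝ) ((φ:ℝ→ᵇℝ) u) - (ψ:ℝ→ᵇℝ) ((ψ:ℝ→ᵇℝ) u) := by ring
        rwa [h2] at h1
      have e2 : |(φ:ℝ→ᵇℝ) ((φ:ℝ→ᵇℝ) u) - (ψ:ℝ→ᵇℝ) ((ψ:ℝ→ᵇℝ) u)|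
          ≤ |(φ:ℝ→ᵇℝ) ((φ:ℝ→ᵇℝ) u) - (φ:ℝ→ᵇℝ) ((ψ:ℝ→ᵇℝ) u)|
            + |(φ:ℝ→ᵇℝ) ((ψ:ℝ→ᵇℝ) u) - (ψ:ℝ→ᵇℝ) ((ψ:ℝ→ᵇℝ) u)| := abs_sub_le _ _ _
      have e3 : |(φ:ℝ→ᵇℝ) ((φ:ℝ→ᵇℝ) u) - (φ:ℝ→ᵇℝ) ((ψ:ℝ→ᵇℝ) u)|
          ≤ L * |(φ:ℝ→ᵇℝ) u - (ψ:ℝ→ᵇℝ) u| := φ.2.1 _ _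
      have e4 : |(φ:ℝ→ᵇℝ) u - (ψ:ℝ→ᵇℝ) u| ≤ d := by
        rw [hd, ← Real.dist_eq]
        exact BoundedContinuousFunction.dist_coe_le_dist u
      have e5 : |(φ:ℝ→ᵇℝ) ((ψ:ℝ→ᵇℝ) u) - (ψ:ℝ→ᵇℝ) ((ψ:ℝ→ᵇℝ) u)| ≤ d := by
        rw [hd, ← Real.dist_eq]
        exact BoundedContinuousFunction.dist_coe_le_dist _
      rw [div_mul_eq_mul_div, le_div_iff₀ hK0]
      nlinarith [mul_le_mul_of_nonneg_left e4 hL0, abs_nonneg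
        ((φ:ℝ→ᵇℝ) ((φ:ℝ→ᵇℝ) u) - (ψ:ℝ→ᵇℝ) ((ψ:ℝ→ᵇℝ) u))]
    exact hdist
  set p : S := ContractingWith.fixedPoint T hTcontract with hpdef
  have hfix : T p = p := hTcontract.fixedPoint_isFixedPt
  refine ⟨((p : ℝ →ᵇ ℝ) : ℝ → ℝ), (p : ℝ →ᵇ ℝ).continuous, ⟨R, fun x => p.2.2 x⟩, ?_⟩
  intro x
  have h1 : ((T p : ℝ →ᵇ ℝ) : ℝ → ℝ) (f x) = (p : ℝ →ᵇ ℝ) (f x) := by rw [hfix]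
  rw [hTapp, hif x] at h1
  have h2 := congrArg h h1
  rw [hhi] at h2
  linarith [h2]
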